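/- For all s, r with 0 ≤ s < r ≤ 1, the 'rectangle' P_{s,r} := S_u ∩ cl_{β𝐒}(ℕ × [s,r] × I) is a connected subset of S_u, where ℕ × [s,r] × I denotes the image in β𝐒, under the canonical map 𝐒 → β𝐒, of the set of points (n,x,y) ∈ 𝐒 with x ∈ [s,r]. -/

import Mathlib

open Set Topology

noncomputable section

/-- A set is an `Fσ` set if it is a countable union of closed sets. -/
def IsFSigma {X : Type*} [TopologicalSpace X] (s : Set X) : Prop :=
  ∃ F : ℕ → Set X, (∀ n, IsClosed (F n)) ∧ s = ⋃ n, F n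

/-- A topological space is an `F`-space if any two disjoint open `Fσ` subsets
have disjoint closures. -/
def IsFSpace (X : Type*) [TopologicalSpace X] : Prop :=
  ∀ s t : Set X, IsOpen s → IsOpen t → IsFSigma s → IsFSigma t → Disjoint s t →
    Disjoint (closure s) (closure t)

/-- `𝐒 = ℕ × [0,1]²` where `ℕ` is discrete and `[0,1]` is the unit interval. -/
abbrev bS : Type := ℕ × (unitInterval × unitInterval)

/-- `βπ : β𝐒 → βℕ`, the Stone–Čech extension of the projection `π(n,x,y) = n`. -/
def betaPi : StoneCech bS → StoneCech ℕ :=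
  stoneCechExtend (continuous_stoneCechUnit.comp continuous_fst)

/-- `βf : β𝐒 → [0,1]`, the Stone–Čech extension of `f(n,x,y) = x`. -/
def betaF : StoneCech bS → unitInterval :=
  stoneCechExtend (continuous_fst.comp continuous_snd)

/-- `S_u = βπ⁻¹(u)`, as a subset of `β𝐒` (carrying the subspace topology). -/
def Su (u : StoneCech ℕ) : Set (StoneCech bS) := betaPi ⁻¹' {u}

/-- `f_u : S_u → [0,1]`, the restriction of `βf` to `S_u`. -/
def fu (u : StoneCech ℕ) : (Su u) → unitInterval := fun z => betaF z.1

/-- `L_t = f_u⁻¹(t) ∩ cl_{S_u} f_u⁻¹([0,t))`. -/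
def Lset (u : StoneCech ℕ) (t : unitInterval) : Set (Su u) :=
  fu u ⁻¹' {t} ∩ closure (fu u ⁻¹' (Set.Ico 0 t))

/-- `R_t = f_u⁻¹(t) ∩ cl_{S_u} f_u⁻¹((t,1])`. -/
def Rset (u : StoneCech ℕ) (t : unitInterval) : Set (Su u) :=
  fu u ⁻¹' {t} ∩ closure (fu u ⁻¹' (Set.Ioc t 1))

/-- The rectangle `P_{s,r} = S_u ∩ cl_{β𝐒}(ℕ × [s,r] × I)`, viewed as a subset of `S_u`. -/
def Pset (u : StoneCech ℕ) (s r : unitInterval) : Set (Su u) :=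
  Subtype.val ⁻¹' closure (stoneCechUnit '' {p : bS | p.2.1 ∈ Set.Icc s r})

/-- `L_{s,t} = cl_{S_u}(⋃_{s<r<t} P_{s,r})`. -/
def Lst (u : StoneCech ℕ) (s t : unitInterval) : Set (Su u) :=
  closure (⋃ r ∈ Set.Ioo s t, Pset u s r)

/-- The interior of `B` in the subspace `A`, viewed as a subset of the ambient space. -/
def relInt {Y : Type*} [TopologicalSpace Y] (A B : Set Y) : Set Y :=
  Subtype.val '' interior ((Subtype.val : A → Y) ⁻¹' B)

/-- The transfinite sequence `X_α ⊆ S_u`: `X_0 = S_u`,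
`X_{α+1} = X_α \ ⋃_{t} Int_{X_α}(X_α ∩ f_u⁻¹(t))`, and `X_λ = ⋂_{β<λ} X_β` at limits. -/
def Xseq (u : StoneCech ℕ) : Ordinal → Set (Su u) := fun α =>
  Ordinal.limitRecOn α Set.univ
    (fun _ Xa => Xa \ ⋃ t : unitInterval, relInt Xa (Xa ∩ fu u ⁻¹' {t}))
    (fun o _ ih => ⋂ (β : {β : Ordinal // β < o}), ih β.1 β.2)

/-- The bottom line `B_u = S_u ∩ cl_{β𝐒}(ℕ × I × {0})`, viewed as a subset of `S_u`. -/
def Bu (u : StoneCech ℕ) : Set (Su u) :=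
  Subtype.val ⁻¹' closure (stoneCechUnit '' {p : bS | p.2.2 = 0})

/-- The top line `T_u = S_u ∩ cl_{β𝐒}(ℕ × I × {1})`, viewed as a subset of `S_u`. -/
def Tu (u : StoneCech ℕ) : Set (Su u) :=
  Subtype.val ⁻¹' closure (stoneCechUnit '' {p : bS | p.2.2 = 1})

/-- For `s < r`, the rectangle `P_{s,r} = S_u ∩ cl_{β𝐒}(ℕ × [s,r] × I)` is a connected
subset of `S_u`. -/
theorem Pset_isConnected (u : StoneCech ℕ)
    (hu : ∀ n : ℕ, u ≠ stoneCechUnit n)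
    (hne : (Su u).Nonempty) (hcomp : IsCompact (Su u)) (hconn : IsConnected (Su u)) :
    ∀ s r : unitInterval, s < r → IsConnected (Pset u s r) := by
  intro s r hsr
  set A : Set bS := {p : bS | p.2.1 ∈ Set.Icc s r} with hA_def
  -- the clamping map
  set g : bS → bS := fun p => (p.1, (s ⊔ (p.2.1 ⊓ r), p.2.2)) with hg_def
  have hg : Continuous g := by
    apply continuous_fst.prodMk
    exact (continuous_const.sup ((continuous_fst.comp continuous_snd).inf
      continuous_const)).prodMk (continuous_snd.comp continuous_snd)
  have hgA : ∀ p : bS, g p ∈ A := by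
    intro p
    exact ⟨le_sup_left, sup_le hsr.le inf_le_right⟩
  have hgid : ∀ p ∈ A, g p = p := by
    rintro ⟨n, x, y⟩ ⟨h1, h2⟩
    simp only [hg_def]
    rw [inf_eq_left.mpr h2, sup_eq_right.mpr h1]
  -- its Stone–Čech extension
  set G : StoneCech bS → StoneCech bS :=
    stoneCechExtend (continuous_stoneCechUnit.comp hg) with hG_def
  have hG : Continuous G := continuous_stoneCechExtend _
  have hGu : ∀ p : bS, G (stoneCechUnit p) = stoneCechUnit (g p) := fun p =>
    congrFun (stoneCechExtend_extends (continuous_stoneCechUnit.comp hg)) p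
  have hPiu : ∀ p : bS, betaPi (stoneCechUnit p) = stoneCechUnit p.1 := fun p =>
    congrFun (stoneCechExtend_extends (continuous_stoneCechUnit.comp continuous_fst)) p
  -- G preserves the fiber over u
  have hpi : ∀ z : StoneCech bS, betaPi (G z) = betaPi z := by
    have : Set.EqOn (betaPi ∘ G) betaPi (Set.range (stoneCechUnit : bS → StoneCech bS)) := by
      rintro _ ⟨p, rfl⟩
      simp only [Function.comp_apply, hGu, hPiu]
      rfl
    have h2 := (Set.EqOn.closure this ((continuous_stoneCechExtend _).comp hG)
      (continuous_stoneCechExtend _))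
    intro z
    exact h2 (by rw [denseRange_stoneCechUnit.closure_range]; trivial)
  -- G is the identity on closure (stoneCechUnit '' A)
  have hid : Set.EqOn G id (closure (stoneCechUnit '' A)) := by
    apply Set.EqOn.closure _ hG continuous_id
    rintro _ ⟨p, hp, rfl⟩
    simp only [hGu, id, hgid p hp]
  -- G maps everything into closure (stoneCechUnit '' A)
  have hmaps : ∀ z : StoneCech bS, G z ∈ closure (stoneCechUnit '' A) := by
    intro z
    have hz : z ∈ closure (Set.range (stoneCechUnit : bS → StoneCech bS)) := by
      rw [denseRange_stoneCechUnit.closure_range]; trivial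
    have h1 : G z ∈ G '' closure (Set.range (stoneCechUnit : bS → StoneCech bS)) :=
      ⟨z, hz, rfl⟩
    have h2 := image_closure_subset_closure_image hG h1
    refine closure_mono ?_ h2
    rintro _ ⟨_, ⟨p, rfl⟩, rfl⟩
    exact ⟨g p, hgA p, (hGu p).symm⟩
  -- the induced map on S_u
  have hmem : ∀ z : Su u, G z.1 ∈ Su u := by
    intro z
    have := z.2
    simp only [Su, Set.mem_preimage, Set.mem_singleton_iff] at this ⊢
    rw [hpi]; exact this
  set h : Su u → Su u := fun z => ⟨G z.1, hmem z⟩ with hh_def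
  have hhc : Continuous h := (hG.comp continuous_subtype_val).subtype_mk _
  -- S_u is a connected space
  have : ConnectedSpace (Su u) := Subtype.connectedSpace hconn
  have hconn' : IsConnected (Set.univ : Set (Su u)) := isConnected_univ
  have himg : h '' Set.univ = Pset u s r := by
    apply Set.Subset.antisymm
    · rintro _ ⟨z, -, rfl⟩
      exact hmaps z.1
    · intro w hw
      have hw' : (w : StoneCech bS) ∈ closure (stoneCechUnit '' A) := hw
      refine ⟨w, trivial, ?_⟩
      apply Subtype.ext
      exact hid hw'
  rw [← himg]
  exact hconn'.image h hhc.continuousOn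

end
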